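/- arXiv:1411.4696 — 8 statements merged into one kernel-verified Lean document; each statement's English description precedes it below -/
import Mathlib

section
/- Let G and G_T be commutative groups, e : G → G → G_T a bilinear map, g, Q ∈ G, and s₁, s₂, r, h integers. Set g₁ = g^{s₁}, g₂ = g^{s₂}, and define U = g^r, V = Q^{s₁h}·g₁^r, W = Q^{s₂}·g₂^r. Then the verification equations of the IBS scheme of Yuan et al. hold: e(V, g) = e(Q^h·U, g₁) and e(W, g) = e(Q·U, g₂). (Correctness of the IBS scheme.) -/
/-- Correctness of the IBS scheme of Yuan et al.: an honestly generated
signature `(U, V, W) = (g^r, Q^{s₁h}·g₁^r, Q^{s₂}·g₂^r)` passes the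
verification equations. -/
theorem ibs_correctness {G G_T : Type*} [CommGroup G] [CommGroup G_T]
    (e : G → G → G_T)
    (hl : ∀ x y z : G, e (x * y) z = e x z * e y z)
    (hr : ∀ x y z : G, e x (y * z) = e x y * e x z)
    (g Q : G) (s₁ s₂ r h : ℤ)
    (g₁ g₂ : G) (hg₁ : g₁ = g ^ s₁) (hg₂ : g₂ = g ^ s₂)
    (U V W : G)
    (hU : U = g ^ r)
    (hV : V = Q ^ (s₁ * h) * g₁ ^ r)
    (hW : W = Q ^ s₂ * g₂ ^ r) :
    e V g = e (Q ^ h * U) g₁ ∧ e W g = e (Q * U) g₂ := by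
  have hlz : ∀ (x z : G) (n : ℤ), e (x ^ n) z = e x z ^ n := fun x z n =>
    (MonoidHom.mk' (fun x => e x z) (fun a b => hl a b z)).map_zpow x n
  have hrz : ∀ (x z : G) (n : ℤ), e x (z ^ n) = e x z ^ n := fun x z n =>
    (MonoidHom.mk' (fun z => e x z) (fun a b => hr x a b)).map_zpow z n
  subst hg₁ hg₂ hU hV hW
  constructor <;>
    simp only [hl, hlz, hrz, ← zpow_mul]
end

section
/- Let G and G_T be commutative groups, e : G → G → G_T a bilinear map, g, Q ∈ G, s₁, s₂, h integers, g₁ = g^{s₁}, g₂ = g^{s₂}. If (U, V, W) ∈ G³ satisfies the verification equations e(V, g) = e(Q^h·U, g₁) and e(W, g) = e(Q·U, g₂), then for every integer r' the re-randomized triple (U·g^{r'}, V·g₁^{r'}, W·g₂^{r'}) also satisfies e(V·g₁^{r'}, g) = e(Q^h·U·g^{r'}, g₁) and e(W·g₂^{r'}, g) = e(Q·U·g^{r'}, g₂). (Public re-randomizability of signatures of the IBS scheme of Yuan et al.) -/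
private lemma bilin_zpow_left {G G_T : Type*} [CommGroup G] [CommGroup G_T]
    (e : G → G → G_T) (hl : ∀ x y z : G, e (x * y) z = e x z * e y z)
    (x y : G) (n : ℤ) : e (x ^ n) y = e x y ^ n := by
  exact map_zpow (MonoidHom.mk' (fun t => e t y) (fun a b => hl a b y)) x n

/-- Public re-randomizability of signatures of the IBS scheme of Yuan et al.:
if `(U, V, W)` satisfies the verification equations for hash value `h`,
then so does `(U·g^{r'}, V·g₁^{r'}, W·g₂^{r'})` for every integer `r'`. -/
theorem ibs_rerandomizable {G G_T : Type*} [CommGroup G] [CommGroup G_T]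
    (e : G → G → G_T)
    (hl : ∀ x y z : G, e (x * y) z = e x z * e y z)
    (hr : ∀ x y z : G, e x (y * z) = e x y * e x z)
    (g Q : G) (s₁ s₂ h : ℤ)
    (g₁ g₂ : G) (hg₁ : g₁ = g ^ s₁) (hg₂ : g₂ = g ^ s₂)
    (U V W : G)
    (hV : e V g = e (Q ^ h * U) g₁)
    (hW : e W g = e (Q * U) g₂) :
    ∀ r' : ℤ,
      e (V * g₁ ^ r') g = e (Q ^ h * (U * g ^ r')) g₁ ∧
      e (W * g₂ ^ r') g = e (Q * (U * g ^ r')) g₂ := by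
  intro r'
  have hrz : ∀ x y : G, ∀ n : ℤ, e x (y ^ n) = e x y ^ n := by
    intro x y n
    exact map_zpow (MonoidHom.mk' (fun t => e x t) (fun a b => hr x a b)) y n
  have key : ∀ k : ℤ, e ((g ^ k) ^ r') g = e (g ^ r') (g ^ k) := by
    intro k
    rw [← zpow_mul, bilin_zpow_left e hl, bilin_zpow_left e hl, hrz,
      ← zpow_mul, mul_comm]
  constructor
  · rw [hl, hV, hg₁, key s₁, ← hl, mul_assoc]
  · rw [hl, hW, hg₂, key s₂, ← hl, mul_assoc]
end

section
/- Let p be a prime, G a commutative group in which every element satisfies x^p = 1, g, Q ∈ G, and s₁, s₂, r₁, r₂, h₁, h₂, h*, δ₁, δ₂ integers with δ₁·h₁ + δ₂·h₂ ≡ h* (mod p) and δ₁ + δ₂ ≡ 1 (mod p). Set g₁ = g^{s₁}, g₂ = g^{s₂} and for i = 1, 2 let (Uᵢ, Vᵢ, Wᵢ) = (g^{rᵢ}, Q^{s₁hᵢ}·g₁^{rᵢ}, Q^{s₂}·g₂^{rᵢ}). Then (U₁^{δ₁}·U₂^{δ₂}, V₁^{δ₁}·V₂^{δ₂}, W₁^{δ₁}·W₂^{δ₂})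 = (g^{r*}, Q^{s₁h*}·g₁^{r*}, Q^{s₂}·g₂^{r*}) where r* = δ₁·r₁ + δ₂·r₂. That is, the linear combination of two honestly generated signatures with hash values h₁, h₂ is an honestly generated signature for hash value h* with randomness r*. (The forged-signature computation in the proof of Lemma 1.) -/
private lemma zpow_congr_mod {G : Type*} [CommGroup G] {p : ℕ}
    (hexp : ∀ x : G, x ^ (p : ℤ) = 1) (x : G) {a b : ℤ}
    (h : a ≡ b [ZMOD (p : ℤ)]) : x ^ a = x ^ b := by
  obtain ⟨k, hk⟩ := (Int.ModEq.dvd h : ((p : ℤ)) ∣ b - a)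
  have : b = a + (p : ℤ) * k := by linarith
  rw [this, zpow_add, zpow_mul, hexp, one_zpow, mul_one]

private lemma combine {G : Type*} [CommGroup G] (Q g : G) (a b c d : ℤ) :
    (Q ^ a * g ^ b) * (Q ^ c * g ^ d) = Q ^ (a + c) * g ^ (b + d) := by
  rw [zpow_add, zpow_add]; exact mul_mul_mul_comm _ _ _ _

/-- The forged-signature computation in the proof of Lemma 1: the linear
combination (with coefficients `δ₁, δ₂` satisfying `δ₁h₁ + δ₂h₂ ≡ h*` and
`δ₁ + δ₂ ≡ 1` mod `p`) of two honestly generated signatures with hash values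
`h₁, h₂` is an honestly generated signature for hash value `h*` with
randomness `r* = δ₁r₁ + δ₂r₂`. -/
theorem forged_signature_honest (p : ℕ) (hp : p.Prime)
    {G : Type*} [CommGroup G] (hexp : ∀ x : G, x ^ (p : ℤ) = 1)
    (g Q : G) (s₁ s₂ r₁ r₂ h₁ h₂ hs δ₁ δ₂ : ℤ)
    (hδh : δ₁ * h₁ + δ₂ * h₂ ≡ hs [ZMOD (p : ℤ)])
    (hδ1 : δ₁ + δ₂ ≡ 1 [ZMOD (p : ℤ)])
    (g₁ g₂ : G) (hg₁ : g₁ = g ^ s₁) (hg₂ : g₂ = g ^ s₂)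
    (U₁ V₁ W₁ U₂ V₂ W₂ : G)
    (hU₁ : U₁ = g ^ r₁) (hV₁ : V₁ = Q ^ (s₁ * h₁) * g₁ ^ r₁)
    (hW₁ : W₁ = Q ^ s₂ * g₂ ^ r₁)
    (hU₂ : U₂ = g ^ r₂) (hV₂ : V₂ = Q ^ (s₁ * h₂) * g₁ ^ r₂)
    (hW₂ : W₂ = Q ^ s₂ * g₂ ^ r₂) :
    U₁ ^ δ₁ * U₂ ^ δ₂ = g ^ (δ₁ * r₁ + δ₂ * r₂) ∧
    V₁ ^ δ₁ * V₂ ^ δ₂ = Q ^ (s₁ * hs) * g₁ ^ (δ₁ * r₁ + δ₂ * r₂) ∧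
    W₁ ^ δ₁ * W₂ ^ δ₂ = Q ^ s₂ * g₂ ^ (δ₁ * r₁ + δ₂ * r₂) := by
  subst hg₁ hg₂ hU₁ hV₁ hW₁ hU₂ hV₂ hW₂
  refine ⟨?_, ?_, ?_⟩
  · rw [← zpow_mul, ← zpow_mul, ← zpow_add, mul_comm r₁ δ₁, mul_comm r₂ δ₂]
  · calc (Q ^ (s₁ * h₁) * (g ^ s₁) ^ r₁) ^ δ₁ * (Q ^ (s₁ * h₂) * (g ^ s₁) ^ r₂) ^ δ₂
        = (Q ^ (s₁ * h₁ * δ₁) * g ^ (s₁ * r₁ * δ₁)) *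
          (Q ^ (s₁ * h₂ * δ₂) * g ^ (s₁ * r₂ * δ₂)) := by
          simp only [mul_zpow, ← zpow_mul]
      _ = Q ^ (s₁ * h₁ * δ₁ + s₁ * h₂ * δ₂) * g ^ (s₁ * r₁ * δ₁ + s₁ * r₂ * δ₂) :=
          combine Q g _ _ _ _
      _ = Q ^ (s₁ * hs) * (g ^ s₁) ^ (δ₁ * r₁ + δ₂ * r₂) := by
          rw [zpow_congr_mod hexp Q (show s₁ * h₁ * δ₁ + s₁ * h₂ * δ₂ ≡ s₁ * hs [ZMOD (p:ℤ)] by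
            calc s₁ * h₁ * δ₁ + s₁ * h₂ * δ₂ = s₁ * (δ₁ * h₁ + δ₂ * h₂) := by ring
              _ ≡ s₁ * hs [ZMOD (p:ℤ)] := hδh.mul_left s₁)]
          rw [← zpow_mul]; ring_nf
  · calc (Q ^ s₂ * (g ^ s₂) ^ r₁) ^ δ₁ * (Q ^ s₂ * (g ^ s₂) ^ r₂) ^ δ₂
        = (Q ^ (s₂ * δ₁) * g ^ (s₂ * r₁ * δ₁)) *
          (Q ^ (s₂ * δ₂) * g ^ (s₂ * r₂ * δ₂)) := by
          simp only [mul_zpow, ← zpow_mul]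
      _ = Q ^ (s₂ * δ₁ + s₂ * δ₂) * g ^ (s₂ * r₁ * δ₁ + s₂ * r₂ * δ₂) :=
          combine Q g _ _ _ _
      _ = Q ^ s₂ * (g ^ s₂) ^ (δ₁ * r₁ + δ₂ * r₂) := by
          rw [zpow_congr_mod hexp Q (show s₂ * δ₁ + s₂ * δ₂ ≡ s₂ [ZMOD (p:ℤ)] by
            calc s₂ * δ₁ + s₂ * δ₂ = s₂ * (δ₁ + δ₂) := by ring
              _ ≡ s₂ * 1 [ZMOD (p:ℤ)] := hδ1.mul_left s₂
              _ = s₂ := by ring)]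
          rw [← zpow_mul]; ring_nf
end

section
/- Let G and G_T be commutative groups, e : G → G → G_T a bilinear map, g, Q ∈ G, s₁, s₂ integers, g₁ = g^{s₁}, g₂ = g^{s₂}. Suppose (U₁, V₁, W₁) and (U₂, V₂, W₂) are valid signatures for integer hash values h₁ and h₂ respectively, i.e., e(Vᵢ, g) = e(Q^{hᵢ}·Uᵢ, g₁) and e(Wᵢ, g) = e(Q·Uᵢ, g₂) for i = 1, 2. Let δ₁, δ₂, h* be integers with δ₁·h₁ + δ₂·h₂ = h* and δ₁ + δ₂ = 1. Then (U*, V*, W*) = (U₁^{δ₁}·U₂^{δ₂}, V₁^{δ₁}·V₂^{δ₂}, W₁^{δ₁}·W₂^{δ₂}) is a valid signature for h*: e(V*, g) = e(Q^{h*}·U*, g₁) and e(W*, g) = e(Q·U*, g₂). (Equation-form of the forgery combination in Lemma 1.) -/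
/-- Equation-form of the forgery combination in Lemma 1: the linear
combination of two valid signatures (with `δ₁h₁ + δ₂h₂ = h*` and
`δ₁ + δ₂ = 1` over the integers) is a valid signature for `h*`. -/
theorem forgery_combination {G G_T : Type*} [CommGroup G] [CommGroup G_T]
    (e : G → G → G_T)
    (hl : ∀ x y z : G, e (x * y) z = e x z * e y z)
    (hr : ∀ x y z : G, e x (y * z) = e x y * e x z)
    (g Q : G) (s₁ s₂ : ℤ)
    (g₁ g₂ : G) (hg₁ : g₁ = g ^ s₁) (hg₂ : g₂ = g ^ s₂)
    (h₁ h₂ hs δ₁ δ₂ : ℤ)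
    (U₁ V₁ W₁ U₂ V₂ W₂ : G)
    (hV₁ : e V₁ g = e (Q ^ h₁ * U₁) g₁) (hW₁ : e W₁ g = e (Q * U₁) g₂)
    (hV₂ : e V₂ g = e (Q ^ h₂ * U₂) g₁) (hW₂ : e W₂ g = e (Q * U₂) g₂)
    (hδh : δ₁ * h₁ + δ₂ * h₂ = hs) (hδ1 : δ₁ + δ₂ = 1) :
    e (V₁ ^ δ₁ * V₂ ^ δ₂) g = e (Q ^ hs * (U₁ ^ δ₁ * U₂ ^ δ₂)) g₁ ∧
    e (W₁ ^ δ₁ * W₂ ^ δ₂) g = e (Q * (U₁ ^ δ₁ * U₂ ^ δ₂)) g₂ := by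
  have hpow : ∀ (x z : G) (n : ℤ), e (x ^ n) z = (e x z) ^ n := by
    intro x z n
    exact (MonoidHom.mk' (fun y => e y z) (fun a b => hl a b z)).map_zpow x n
  constructor
  · have := calc e (V₁ ^ δ₁ * V₂ ^ δ₂) g
        = (e V₁ g) ^ δ₁ * (e V₂ g) ^ δ₂ := by rw [hl, hpow, hpow]
      _ = (e (Q ^ h₁ * U₁) g₁) ^ δ₁ * (e (Q ^ h₂ * U₂) g₁) ^ δ₂ := by rw [hV₁, hV₂]
      _ = e ((Q ^ h₁ * U₁) ^ δ₁ * (Q ^ h₂ * U₂) ^ δ₂) g₁ := by rw [← hpow, ← hpow, ← hl]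
    rw [this]
    congr 1
    have : (Q ^ h₁ * U₁) ^ δ₁ * (Q ^ h₂ * U₂) ^ δ₂
        = Q ^ (δ₁ * h₁ + δ₂ * h₂) * (U₁ ^ δ₁ * U₂ ^ δ₂) := by
      rw [mul_zpow, mul_zpow, ← zpow_mul, ← zpow_mul,
        mul_comm h₁ δ₁, mul_comm h₂ δ₂, zpow_add]
      simp [mul_assoc, mul_comm, mul_left_comm]
    rw [this, hδh]
  · have := calc e (W₁ ^ δ₁ * W₂ ^ δ₂) g
        = (e W₁ g) ^ δ₁ * (e W₂ g) ^ δ₂ := by rw [hl, hpow, hpow]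
      _ = (e (Q * U₁) g₂) ^ δ₁ * (e (Q * U₂) g₂) ^ δ₂ := by rw [hW₁, hW₂]
      _ = e ((Q * U₁) ^ δ₁ * (Q * U₂) ^ δ₂) g₂ := by rw [← hpow, ← hpow, ← hl]
    rw [this]
    congr 1
    have : (Q * U₁) ^ δ₁ * (Q * U₂) ^ δ₂
        = Q ^ (δ₁ + δ₂) * (U₁ ^ δ₁ * U₂ ^ δ₂) := by
      rw [mul_zpow, mul_zpow, zpow_add]
      simp [mul_assoc, mul_comm, mul_left_comm]
    rw [this, hδ1, zpow_one]
end

section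
/- Let p be a prime, G and G_T commutative groups with x^p = 1 for all x ∈ G, e : G → G → G_T a bilinear map, g, Q ∈ G, s₁, s₂ integers, g₁ = g^{s₁}, g₂ = g^{s₂}. Suppose (U₁, V₁, W₁) and (U₂, V₂, W₂) are valid signatures for integer hash values h₁ and h₂ with h₁ ≢ h₂ (mod p). Then for every integer h* there exist integers δ₁, δ₂ such that (U₁^{δ₁}·U₂^{δ₂}, V₁^{δ₁}·V₂^{δ₂}, W₁^{δ₁}·W₂^{δ₂}) is a valid signature for h*. In particular, from any two valid signatures under the same identity with distinct hash values one can forge a valid signature for any chosen hash value. (Algebraic core of Lemma 1: universal forgery against the IBS scheme of Yuan et al.) -/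
/-- Algebraic core of Lemma 1 (universal forgery against the IBS scheme of
Yuan et al.): from two valid signatures with hash values `h₁ ≢ h₂ (mod p)`
one can forge a valid signature for any hash value `h*`. -/
theorem universal_forgery (p : ℕ) (hp : p.Prime)
    {G G_T : Type*} [CommGroup G] [CommGroup G_T]
    (hexp : ∀ x : G, x ^ (p : ℤ) = 1)
    (e : G → G → G_T)
    (hl : ∀ x y z : G, e (x * y) z = e x z * e y z)
    (hr : ∀ x y z : G, e x (y * z) = e x y * e x z)
    (g Q : G) (s₁ s₂ : ℤ)
    (g₁ g₂ : G) (hg₁ : g₁ = g ^ s₁) (hg₂ : g₂ = g ^ s₂)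
    (h₁ h₂ : ℤ) (hne : ¬ h₁ ≡ h₂ [ZMOD (p : ℤ)])
    (U₁ V₁ W₁ U₂ V₂ W₂ : G)
    (hV₁ : e V₁ g = e (Q ^ h₁ * U₁) g₁) (hW₁ : e W₁ g = e (Q * U₁) g₂)
    (hV₂ : e V₂ g = e (Q ^ h₂ * U₂) g₁) (hW₂ : e W₂ g = e (Q * U₂) g₂) :
    ∀ hs : ℤ, ∃ δ₁ δ₂ : ℤ,
      e (V₁ ^ δ₁ * V₂ ^ δ₂) g = e (Q ^ hs * (U₁ ^ δ₁ * U₂ ^ δ₂)) g₁ ∧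
      e (W₁ ^ δ₁ * W₂ ^ δ₂) g = e (Q * (U₁ ^ δ₁ * U₂ ^ δ₂)) g₂ := by
  intro hs
  haveI : Fact p.Prime := ⟨hp⟩
  -- pairing is a homomorphism in the left argument
  have epow : ∀ (x y : G) (n : ℤ), e (x ^ n) y = e x y ^ n := fun x y n =>
    (MonoidHom.mk' (fun x => e x y) (fun a b => hl a b y)).map_zpow x n
  have eone : ∀ y : G, e 1 y = 1 := fun y =>
    (MonoidHom.mk' (fun x => e x y) (fun a b => hl a b y)).map_one
  -- exponents can be read mod p in pairing values
  have pow_congr : ∀ (x y : G) (a b : ℤ), a ≡ b [ZMOD (p : ℤ)] →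
      e x y ^ a = e x y ^ b := by
    intro x y a b hab
    obtain ⟨k, hk⟩ := hab.dvd
    have hb : b = a + (p : ℤ) * k := by linarith
    have hpow : e x y ^ (p : ℤ) = 1 := by
      rw [← epow, hexp, eone]
    rw [hb, zpow_add, zpow_mul, hpow, one_zpow, mul_one]
  -- choose the forgery coefficients
  have hd : ((h₁ : ZMod p) - (h₂ : ZMod p)) ≠ 0 := by
    intro h
    exact hne ((ZMod.intCast_eq_intCast_iff h₁ h₂ p).mp (by linear_combination h))
  set d₁ : ZMod p := ((hs : ZMod p) - h₂) * ((h₁ : ZMod p) - h₂)⁻¹ with hd₁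
  set δ₁ : ℤ := (d₁.val : ℤ) with hδ₁
  set δ₂ : ℤ := ((1 - d₁).val : ℤ) with hδ₂
  refine ⟨δ₁, δ₂, ?_, ?_⟩
  · -- exponent identity: h₁δ₁ + h₂δ₂ ≡ hs
    have key : h₁ * δ₁ + h₂ * δ₂ ≡ hs [ZMOD (p : ℤ)] := by
      have : ((h₁ * δ₁ + h₂ * δ₂ : ℤ) : ZMod p) = ((hs : ℤ) : ZMod p) := by
        push_cast [hδ₁, hδ₂, ZMod.intCast_cast, ZMod.natCast_val, ZMod.cast_id]
        field_simp [hd₁]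
        have h' : ((h₁ : ZMod p) - h₂) * d₁ = hs - h₂ := by
          rw [hd₁, mul_comm, mul_assoc, inv_mul_cancel₀ hd, mul_one]
        linear_combination h'
      exact (ZMod.intCast_eq_intCast_iff _ _ _).mp this
    have hQ : e Q g₁ ^ (h₁ * δ₁ + h₂ * δ₂) = e Q g₁ ^ hs := pow_congr _ _ _ _ key
    simp only [hl, epow, hV₁, hV₂, mul_zpow, ← zpow_mul]
    rw [← hQ, zpow_add]
    ring_nf
    simp [mul_assoc, mul_comm, mul_left_comm]
  · have key : δ₁ + δ₂ ≡ 1 [ZMOD (p : ℤ)] := by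
      have : ((δ₁ + δ₂ : ℤ) : ZMod p) = ((1 : ℤ) : ZMod p) := by
        push_cast [hδ₁, hδ₂, ZMod.intCast_cast, ZMod.natCast_val, ZMod.cast_id]
        ring
      exact (ZMod.intCast_eq_intCast_iff _ _ _).mp this
    have hQ : e Q g₂ ^ (δ₁ + δ₂) = e Q g₂ ^ (1 : ℤ) := pow_congr _ _ _ _ key
    simp only [hl, epow, hW₁, hW₂, mul_zpow]
    conv_rhs => rw [← zpow_one (e Q g₂), ← hQ, zpow_add]
    simp [mul_assoc, mul_comm, mul_left_comm]
end

section
/- Let G and G_T be commutative groups, e : G → G → G_T a bilinear map, g ∈ G, s₁, s₂ integers, g₁ = g^{s₁}, g₂ = g^{s₂}. Let S₁ and S₂ be disjoint finite index sets with elements Qᵢ ∈ G and integers hᵢ for i ∈ S₁ ∪ S₂. Suppose (U₁, V₁, W₁) is a valid aggregate signature for the family (Qᵢ, hᵢ)_{i∈S₁} and (U₂, V₂, W₂) is a valid aggregate signature for (Qᵢ, hᵢ)_{i∈S₂}, i.e., e(Vⱼ, g) = e((∏_{i∈Sⱼ} Qᵢ^{hᵢ})·Uⱼ, g₁) and e(Wⱼ,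 g) = e((∏_{i∈Sⱼ} Qᵢ)·Uⱼ, g₂) for j = 1, 2. Then (U₁·U₂, V₁·V₂, W₁·W₂) is a valid aggregate signature for the family (Qᵢ, hᵢ)_{i∈S₁∪S₂}. (Correctness of the Aggregate algorithm of the IBAS scheme of Yuan et al.) -/
/-- Correctness of the Aggregate algorithm of the IBAS scheme of Yuan et al.:
the componentwise product of two valid aggregate signatures on disjoint
multisets is a valid aggregate signature on the union. -/
theorem aggregate_correctness {G G_T : Type*} [CommGroup G] [CommGroup G_T]
    (e : G → G → G_T)
    (hl : ∀ x y z : G, e (x * y) z = e x z * e y z)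
    (hr : ∀ x y z : G, e x (y * z) = e x y * e x z)
    (g : G) (s₁ s₂ : ℤ)
    (g₁ g₂ : G) (hg₁ : g₁ = g ^ s₁) (hg₂ : g₂ = g ^ s₂)
    {ι : Type*} [DecidableEq ι] (S₁ S₂ : Finset ι) (hdisj : Disjoint S₁ S₂)
    (Q : ι → G) (h : ι → ℤ)
    (U₁ V₁ W₁ U₂ V₂ W₂ : G)
    (hV₁ : e V₁ g = e ((∏ i ∈ S₁, Q i ^ h i) * U₁) g₁)
    (hW₁ : e W₁ g = e ((∏ i ∈ S₁, Q i) * U₁) g₂)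
    (hV₂ : e V₂ g = e ((∏ i ∈ S₂, Q i ^ h i) * U₂) g₁)
    (hW₂ : e W₂ g = e ((∏ i ∈ S₂, Q i) * U₂) g₂) :
    e (V₁ * V₂) g = e ((∏ i ∈ S₁ ∪ S₂, Q i ^ h i) * (U₁ * U₂)) g₁ ∧
    e (W₁ * W₂) g = e ((∏ i ∈ S₁ ∪ S₂, Q i) * (U₁ * U₂)) g₂ := by
  rw [Finset.prod_union hdisj, Finset.prod_union hdisj]
  constructor
  · rw [hl, hV₁, hV₂, ← hl]
    congr 1; exact mul_mul_mul_comm _ _ _ _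
  · rw [hl, hW₁, hW₂, ← hl]
    congr 1; exact mul_mul_mul_comm _ _ _ _
end

section
/- Let G and G_T be commutative groups, e : G → G → G_T a bilinear map, g ∈ G, s₁, s₂ integers, g₁ = g^{s₁}, g₂ = g^{s₂}. Let S be a finite index set and, for each i ∈ S, let Qᵢ ∈ G, hᵢ an integer, and (Uᵢ, Vᵢ, Wᵢ) a valid individual signature, i.e., e(Vᵢ, g) = e(Qᵢ^{hᵢ}·Uᵢ, g₁) and e(Wᵢ, g) = e(Qᵢ·Uᵢ, g₂). Then the componentwise product (U, V, W) = (∏_{i∈S} Uᵢ, ∏_{i∈S} Vᵢ, ∏_{i∈S} Wᵢ) is a valid aggregate signature for the family (Qᵢ, hᵢ)_{i∈S}: e(V, g) = e((∏_{i∈S} Qᵢ^{hᵢ})·U, g₁) and e(W, g) = e((∏_{i∈S} Qᵢ)·U, g₂). (Full aggregation correctness of the IBAS scheme of Yuan et al.) -/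
lemma bilin_prod {G G_T : Type*} [CommGroup G] [CommGroup G_T]
    (e : G → G → G_T)
    (hl : ∀ x y z : G, e (x * y) z = e x z * e y z)
    {ι : Type*} (S : Finset ι) (f : ι → G) (z : G) :
    e (∏ i ∈ S, f i) z = ∏ i ∈ S, e (f i) z := by
  have h1 : e 1 z = 1 := by
    have := hl 1 1 z
    simp only [mul_one] at this
    exact left_eq_mul.mp this
  classical
  induction S using Finset.induction with
  | empty => simpa using h1
  | insert _ _ hx ih =>
    rw [Finset.prod_insert hx, Finset.prod_insert hx, hl, ih]

/-- Full aggregation correctness of the IBAS scheme of Yuan et al.: the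
componentwise product of a finite family of valid individual signatures is a
valid aggregate signature for the family. -/
theorem full_aggregation_correctness {G G_T : Type*} [CommGroup G] [CommGroup G_T]
    (e : G → G → G_T)
    (hl : ∀ x y z : G, e (x * y) z = e x z * e y z)
    (hr : ∀ x y z : G, e x (y * z) = e x y * e x z)
    (g : G) (s₁ s₂ : ℤ)
    (g₁ g₂ : G) (hg₁ : g₁ = g ^ s₁) (hg₂ : g₂ = g ^ s₂)
    {ι : Type*} (S : Finset ι) (Q : ι → G) (h : ι → ℤ)
    (U V W : ι → G)
    (hV : ∀ i ∈ S, e (V i) g = e (Q i ^ h i * U i) g₁)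
    (hW : ∀ i ∈ S, e (W i) g = e (Q i * U i) g₂) :
    e (∏ i ∈ S, V i) g = e ((∏ i ∈ S, Q i ^ h i) * ∏ i ∈ S, U i) g₁ ∧
    e (∏ i ∈ S, W i) g = e ((∏ i ∈ S, Q i) * ∏ i ∈ S, U i) g₂ := by
  constructor
  · rw [bilin_prod e hl, ← Finset.prod_mul_distrib, bilin_prod e hl]
    exact Finset.prod_congr rfl hV
  · rw [bilin_prod e hl, ← Finset.prod_mul_distrib, bilin_prod e hl]
    exact Finset.prod_congr rfl hW
end

section
/- Let G and G_T be commutative groups, e : G → G → G_T a bilinear map, g, Q ∈ G, s₁, s₂ integers, g₁ = g^{s₁}, g₂ = g^{s₂}. Suppose (U, V₁, W₁) and (U, V₂, W₂) are valid signatures for integer hash values h₁ and h₂ respectively, sharing the same first component U. Then e(V₁·V₂⁻¹, g) = e(Q, g₁)^{h₁ − h₂}. (The key identity used by the simulator of Yuan et al. to extract the CDH value from two forking forgeries with equal first components.) -/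
/-- The key identity used by the simulator of Yuan et al. to extract the CDH
value from two forking forgeries with equal first components:
`e(V₁·V₂⁻¹, g) = e(Q, g₁)^{h₁ − h₂}`. -/
theorem extraction_identity {G G_T : Type*} [CommGroup G] [CommGroup G_T]
    (e : G → G → G_T)
    (hl : ∀ x y z : G, e (x * y) z = e x z * e y z)
    (hr : ∀ x y z : G, e x (y * z) = e x y * e x z)
    (g Q : G) (s₁ s₂ : ℤ)
    (g₁ g₂ : G) (hg₁ : g₁ = g ^ s₁) (hg₂ : g₂ = g ^ s₂)
    (h₁ h₂ : ℤ) (U V₁ W₁ V₂ W₂ : G)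
    (hV₁ : e V₁ g = e (Q ^ h₁ * U) g₁) (hW₁ : e W₁ g = e (Q * U) g₂)
    (hV₂ : e V₂ g = e (Q ^ h₂ * U) g₁) (hW₂ : e W₂ g = e (Q * U) g₂) :
    e (V₁ * V₂⁻¹) g = e Q g₁ ^ (h₁ - h₂) := by
  have hone : ∀ z : G, e 1 z = 1 := by
    intro z
    have := hl 1 1 z
    simp at this
    exact this
  let f : ∀ z : G, G →* G_T := fun z =>
    { toFun := fun x => e x z, map_one' := hone z, map_mul' := fun x y => hl x y z }
  have hpow : ∀ (x z : G) (n : ℤ), e (x ^ n) z = e x z ^ n := fun x z n =>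
    ((f z).map_zpow x n : _)
  have hinv : ∀ (x z : G), e x⁻¹ z = (e x z)⁻¹ := fun x z => ((f z).map_inv x : _)
  calc e (V₁ * V₂⁻¹) g = e V₁ g * (e V₂ g)⁻¹ := by rw [hl, hinv]
    _ = e (Q ^ h₁ * U) g₁ * (e (Q ^ h₂ * U) g₁)⁻¹ := by rw [hV₁, hV₂]
    _ = e Q g₁ ^ h₁ * e U g₁ * (e Q g₁ ^ h₂ * e U g₁)⁻¹ := by rw [hl, hl, hpow, hpow]
    _ = e Q g₁ ^ (h₁ - h₂) := by group
end
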